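/- Let K ≥ 1 and n ≥ K+2 be integers and let s ∈ (0,1). Under the random pruning-edge model, the variance of |Z| satisfies 0 < Var(|Z|) < (8/s² − 2/s)·(1-s)^{n-K-1}. -/

import Mathlib

open MeasureTheory

/-- Potential pruning edges: pairs `(u,w)` with `1 ≤ u` and `u + K < w ≤ n`. -/
abbrev EdgeIdx (K n : ℕ) : Type :=
  {p : Fin (n + 1) × Fin (n + 1) // 1 ≤ (p.1 : ℕ) ∧ (p.1 : ℕ) + K < (p.2 : ℕ)}

/-- The pruning edge `e` covers the vertex `v` if `u + K < v ≤ w`. -/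
def covers {K n : ℕ} (e : EdgeIdx K n) (v : ℕ) : Prop :=
  (e.1.1 : ℕ) + K < v ∧ v ≤ (e.1.2 : ℕ)

instance {K n : ℕ} (e : EdgeIdx K n) (v : ℕ) : Decidable (covers e v) := by
  unfold covers; infer_instance

/-- The set `Z(ω)` of vertices `v ∈ {K+1, …, n}` covered by no present pruning edge. -/
def Zset (K n : ℕ) (ω : EdgeIdx K n → Bool) : Finset ℕ :=
  (Finset.Icc (K + 1) n).filter fun v => ∀ e : EdgeIdx K n, ω e = true → ¬ covers e v

/-- The product probability measure on outcomes `ω : EdgeIdx K n → Bool`, where each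
potential pruning edge is independently present with probability `s` (for `s ∈ [0,1]`;
the parameter is clamped to `[0,1]`, which is the identity for such `s`). -/
noncomputable def prunMeasure (K n : ℕ) (s : ℝ) : Measure (EdgeIdx K n → Bool) :=
  Measure.pi fun _ =>
    (PMF.bernoulli (min (Real.toNNReal s) 1) (min_le_right _ _)).toMeasure


def Sv (K n : ℕ) (v : ℕ) : Finset (EdgeIdx K n) :=
  Finset.univ.filter fun e => covers e v

def Aev (K n : ℕ) (S : Finset (EdgeIdx K n)) : Set (EdgeIdx K n → Bool) :=
  {ω | ∀ e ∈ S, ω e = false}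

instance (K n : ℕ) (s : ℝ) : IsProbabilityMeasure (prunMeasure K n s) := by
  unfold prunMeasure; infer_instance

lemma Aev_inter {K n : ℕ} (S T : Finset (EdgeIdx K n)) :
    Aev K n S ∩ Aev K n T = Aev K n (S ∪ T) := by
  ext ω
  simp only [Aev, Set.mem_inter_iff, Set.mem_setOf_eq, Finset.mem_union, or_imp, forall_and]

lemma measure_Aev {K n : ℕ} {s : ℝ} (hs0 : 0 ≤ s) (hs1 : s ≤ 1) (S : Finset (EdgeIdx K n)) :
    prunMeasure K n s (Aev K n S) = ENNReal.ofReal (1 - s) ^ S.card := by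
  classical
  have hmin : (min (Real.toNNReal s) 1 : NNReal) = Real.toNNReal s :=
    min_eq_left (Real.toNNReal_le_one.mpr hs1)
  have hAev : Aev K n S
      = Set.univ.pi fun e => if e ∈ S then ({false} : Set Bool) else Set.univ := by
    ext ω
    simp only [Aev, Set.mem_setOf_eq, Set.mem_pi, Set.mem_univ, forall_true_left]
    refine forall_congr' fun e => ?_
    by_cases h : e ∈ S <;> simp [h]
  rw [hAev, prunMeasure, Measure.pi_pi]
  have hb : ((PMF.bernoulli (min (Real.toNNReal s) 1) (min_le_right _ _)).toMeasure :
      Measure Bool) {false} = ENNReal.ofReal (1 - s) := by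
    rw [PMF.toMeasure_apply_singleton _ _ (measurableSet_singleton _), PMF.bernoulli_apply]
    have h1 : (1 - Real.toNNReal s : NNReal) = Real.toNNReal (1 - s) := by
      apply NNReal.eq; rw [NNReal.coe_sub (Real.toNNReal_le_one.mpr hs1), Real.coe_toNNReal _ hs0, Real.coe_toNNReal _ (by linarith), NNReal.coe_one]
    simp only [hmin, cond_false, h1]; rfl
  have hfac : ∀ e : EdgeIdx K n,
      ((PMF.bernoulli (min (Real.toNNReal s) 1) (min_le_right _ _)).toMeasure : Measure Bool)
        (if e ∈ S then ({false} : Set Bool) else Set.univ)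
      = if e ∈ S then ENNReal.ofReal (1 - s) else 1 := by
    intro e; by_cases h : e ∈ S <;> simp only [h, ↓reduceIte, hb, measure_univ]
  simp only [hfac]
  rw [Finset.prod_ite_mem, Finset.univ_inter, Finset.prod_const]

lemma card_Zset_eq {K n : ℕ} (ω : EdgeIdx K n → Bool) : ((Zset K n ω).card : ℝ)
    = ∑ v ∈ Finset.Icc (K+1) n, (Aev K n (Sv K n v)).indicator (fun _ => (1:ℝ)) ω := by
  classical
  rw [Zset, Finset.card_filter]
  push_cast
  refine Finset.sum_congr rfl fun v hv => ?_
  by_cases h : ω ∈ Aev K n (Sv K n v)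
  · rw [Set.indicator_of_mem h, if_pos]
    intro e het hc
    have hf := h e (by simp [Sv, hc])
    rw [hf] at het; exact Bool.false_ne_true het
  · rw [Set.indicator_of_notMem h, if_neg]
    intro hall
    refine h fun e he => ?_
    have hc : covers e v := by simpa [Sv] using he
    cases hωe : ω e with
    | false => rfl
    | true => exact absurd hc (hall e hωe)

lemma integral_card {K n : ℕ} {s : ℝ} (hs0 : 0 ≤ s) (hs1 : s ≤ 1) :
    ∫ ω, ((Zset K n ω).card : ℝ) ∂(prunMeasure K n s)
      = ∑ v ∈ Finset.Icc (K+1) n, (1 - s) ^ (Sv K n v).card := by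
  simp only [card_Zset_eq]
  rw [integral_finset_sum _ (fun v _ => Integrable.of_finite)]
  refine Finset.sum_congr rfl fun v hv => ?_
  rw [integral_indicator_const (1:ℝ) ((Set.toFinite _).measurableSet), measureReal_def, measure_Aev hs0 hs1]
  simp [ENNReal.toReal_pow, ENNReal.toReal_ofReal (by linarith : (0:ℝ) ≤ 1 - s)]

lemma integral_card_sq {K n : ℕ} {s : ℝ} (hs0 : 0 ≤ s) (hs1 : s ≤ 1) :
    ∫ ω, ((Zset K n ω).card : ℝ)^2 ∂(prunMeasure K n s)
      = ∑ v ∈ Finset.Icc (K+1) n, ∑ w ∈ Finset.Icc (K+1) n,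
          (1 - s) ^ (Sv K n v ∪ Sv K n w).card := by
  classical
  have hrw : ∀ ω : EdgeIdx K n → Bool, ((Zset K n ω).card : ℝ)^2
      = ∑ v ∈ Finset.Icc (K+1) n, ∑ w ∈ Finset.Icc (K+1) n,
          (Aev K n (Sv K n v ∪ Sv K n w)).indicator (fun _ => (1:ℝ)) ω := by
    intro ω
    rw [sq, card_Zset_eq, Finset.sum_mul_sum]
    refine Finset.sum_congr rfl fun v _ => Finset.sum_congr rfl fun w _ => ?_
    simpa [Aev_inter] using
      (Set.inter_indicator_mul (s := Aev K n (Sv K n v)) (t := Aev K n (Sv K n w))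
        (fun _ => (1:ℝ)) (fun _ => (1:ℝ)) ω).symm
  simp only [hrw]
  rw [integral_finset_sum _ (fun v _ => Integrable.of_finite)]
  refine Finset.sum_congr rfl fun v hv => ?_
  rw [integral_finset_sum _ (fun w _ => Integrable.of_finite)]
  refine Finset.sum_congr rfl fun w hw => ?_
  rw [integral_indicator_const (1:ℝ) ((Set.toFinite _).measurableSet), measureReal_def, measure_Aev hs0 hs1]
  simp [ENNReal.toReal_pow, ENNReal.toReal_ofReal (by linarith : (0:ℝ) ≤ 1 - s)]

lemma card_T {K n : ℕ} (x y : ℕ) (hxy : x ≤ y) :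
    (Finset.univ.filter fun e : EdgeIdx K n => (e.1.1:ℕ) + K < x ∧ y ≤ (e.1.2:ℕ)).card
      = (x - (K+1)) * (n + 1 - y) := by
  classical
  have hc : ((Finset.Icc 1 (x - (K+1))) ×ˢ (Finset.Icc y n)).card
      = (x - (K+1)) * (n + 1 - y) := by
    simp [Nat.card_Icc]
  rw [← hc]
  refine (Finset.card_bij (fun e _ => (((e : EdgeIdx K n).1.1 : ℕ), ((e : EdgeIdx K n).1.2 : ℕ)))
    ?_ ?_ ?_)
  · intro e he
    simp only [Finset.mem_filter, Finset.mem_univ, true_and] at he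
    have h1 := e.2.1
    have hlt : ((e : EdgeIdx K n).1.2 : ℕ) < n + 1 := (e : EdgeIdx K n).1.2.isLt
    simp only [Finset.mem_product, Finset.mem_Icc]
    omega
  · intro a _ b _ hab
    apply Subtype.ext
    have h1 : ((a : EdgeIdx K n).1.1 : ℕ) = ((b : EdgeIdx K n).1.1 : ℕ) := congrArg Prod.fst hab
    have h2 : ((a : EdgeIdx K n).1.2 : ℕ) = ((b : EdgeIdx K n).1.2 : ℕ) := congrArg Prod.snd hab
    exact Prod.ext (Fin.ext h1) (Fin.ext h2)
  · intro p hp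
    simp only [Finset.mem_product, Finset.mem_Icc] at hp
    obtain ⟨⟨hp1, hp2⟩, hp3, hp4⟩ := hp
    have hu : p.1 < n + 1 := by omega
    have hw : p.2 < n + 1 := by omega
    refine ⟨⟨(⟨p.1, hu⟩, ⟨p.2, hw⟩), hp1, show p.1 + K < p.2 by omega⟩, ?_, rfl⟩
    simp only [Finset.mem_filter, Finset.mem_univ, true_and]
    exact ⟨show p.1 + K < x by omega, show y ≤ p.2 by omega⟩

lemma Sv_eq_T {K n : ℕ} (v : ℕ) : Sv K n v
    = Finset.univ.filter fun e : EdgeIdx K n => (e.1.1:ℕ) + K < v ∧ v ≤ (e.1.2:ℕ) := by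
  apply Finset.filter_congr
  intro e _
  simp [covers]

lemma card_Sv {K n : ℕ} (v : ℕ) : (Sv K n v).card = (v - (K+1)) * (n + 1 - v) := by
  rw [Sv_eq_T, card_T v v le_rfl]

lemma Sv_inter {K n : ℕ} (v w : ℕ) (hvw : v ≤ w) :
    Sv K n v ∩ Sv K n w
      = Finset.univ.filter fun e : EdgeIdx K n => (e.1.1:ℕ) + K < v ∧ w ≤ (e.1.2:ℕ) := by
  ext e
  simp only [Finset.mem_inter, Sv, Finset.mem_filter, Finset.mem_univ, true_and]
  unfold covers
  omega

lemma card_Sv_inter {K n : ℕ} (v w : ℕ) (hvw : v ≤ w) :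
    (Sv K n v ∩ Sv K n w).card = (v - (K+1)) * (n + 1 - w) := by
  rw [Sv_inter v w hvw, card_T v w hvw]

lemma Sv_base_empty {K n : ℕ} : Sv K n (K+1) = ∅ := by
  apply Finset.card_eq_zero.mp
  rw [card_Sv]
  simp

lemma a_eq {K n : ℕ} (v : ℕ) (hv : K+2 ≤ v) (hvn : v ≤ n) :
    (v - (K+1)) * (n + 1 - v) = (n - K - 1) + (v - (K+2)) * (n - v) := by
  obtain ⟨x, rfl⟩ : ∃ x, v = K+2+x := ⟨v - (K+2), by omega⟩
  obtain ⟨y, rfl⟩ : ∃ y, n = (K+2+x)+y := ⟨n - (K+2+x), by omega⟩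
  have h1 : K+2+x - (K+1) = x+1 := by omega
  have h2 : (K+2+x)+y + 1 - (K+2+x) = y+1 := by omega
  have h3 : (K+2+x)+y - K - 1 = x+y+1 := by omega
  have h4 : K+2+x - (K+2) = x := by omega
  have h5 : (K+2+x)+y - (K+2+x) = y := by omega
  rw [h1, h2, h3, h4, h5]
  ring

lemma U_ge {K n : ℕ} (v w : ℕ) (hv : K+2 ≤ v) (hvw : v ≤ w) (hw : w ≤ n) :
    (Sv K n w).card + (w - v) ≤ (Sv K n v ∪ Sv K n w).card := by
  classical
  have hsum := Finset.card_union_add_card_inter (Sv K n v) (Sv K n w)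
  have hi := card_Sv_inter (K := K) (n := n) v w hvw
  have h1 : n + 1 - v = (n + 1 - w) + (w - v) := by omega
  have h2 : (Sv K n v).card = (v-(K+1))*(n+1-w) + (v-(K+1))*(w-v) := by
    rw [card_Sv, h1, Nat.mul_add]
  have h3 : w - v ≤ (v-(K+1))*(w-v) := Nat.le_mul_of_pos_left _ (by omega)
  omega

lemma myGeomSum_le {q : ℝ} (h0 : 0 ≤ q) (h1 : q < 1) (m : ℕ) :
    ∑ j ∈ Finset.range m, q^j ≤ 1/(1-q) := by
  rw [one_div, ← tsum_geometric_of_lt_one h0 h1]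
  exact Summable.sum_le_tsum _ (fun i _ => pow_nonneg h0 i) (summable_geometric_of_lt_one h0 h1)

/-- Sum of `q^(w₀ - v)` over an interval with `b ≤ w₀` is at most `1/(1-q)`. -/
lemma sum_pow_sub_le {q : ℝ} (h0 : 0 ≤ q) (h1 : q < 1) (a b w₀ : ℕ) (hb : b ≤ w₀) :
    ∑ v ∈ Finset.Icc a b, q^(w₀ - v) ≤ 1/(1-q) := by
  classical
  have hinj : ∀ x ∈ Finset.Icc a b, ∀ y ∈ Finset.Icc a b,
      w₀ - x = w₀ - y → x = y := by
    intro x hx y hy h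
    simp only [Finset.mem_Icc] at hx hy
    omega
  have himg : (Finset.Icc a b).image (fun v => w₀ - v) ⊆ Finset.range (w₀ + 1) := by
    intro j hj
    simp only [Finset.mem_image] at hj
    obtain ⟨v, hv, rfl⟩ := hj
    simp only [Finset.mem_range]
    omega
  calc ∑ v ∈ Finset.Icc a b, q^(w₀ - v)
      = ∑ j ∈ (Finset.Icc a b).image (fun v => w₀ - v), q^j := (Finset.sum_image hinj).symm
    _ ≤ ∑ j ∈ Finset.range (w₀ + 1), q^j :=
        Finset.sum_le_sum_of_subset_of_nonneg himg (fun j _ _ => pow_nonneg h0 j)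
    _ ≤ 1/(1-q) := myGeomSum_le h0 h1 _

lemma sum_pow_sub_le' {q : ℝ} (h0 : 0 ≤ q) (h1 : q < 1) (a b : ℕ) :
    ∑ v ∈ Finset.Icc a b, q^(v - a) ≤ 1/(1-q) := by
  classical
  have hinj : ∀ x ∈ Finset.Icc a b, ∀ y ∈ Finset.Icc a b,
      x - a = y - a → x = y := by
    intro x hx y hy h
    simp only [Finset.mem_Icc] at hx hy
    omega
  have himg : (Finset.Icc a b).image (fun v => v - a) ⊆ Finset.range (b + 1) := by
    intro j hj
    simp only [Finset.mem_image] at hj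
    obtain ⟨v, hv, rfl⟩ := hj
    simp only [Finset.mem_Icc] at hv
    simp only [Finset.mem_range]
    omega
  calc ∑ v ∈ Finset.Icc a b, q^(v - a)
      = ∑ j ∈ (Finset.Icc a b).image (fun v => v - a), q^j := (Finset.sum_image hinj).symm
    _ ≤ ∑ j ∈ Finset.range (b + 1), q^j :=
        Finset.sum_le_sum_of_subset_of_nonneg himg (fun j _ _ => pow_nonneg h0 j)
    _ ≤ 1/(1-q) := myGeomSum_le h0 h1 _

lemma min_le_mul (x y : ℕ) : min x y ≤ x * y := by
  rcases Nat.eq_zero_or_pos x with hx | hx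
  · simp [hx]
  rcases Nat.eq_zero_or_pos y with hy | hy
  · simp [hy]
  calc min x y ≤ x := min_le_left _ _
    _ = x * 1 := (mul_one x).symm
    _ ≤ x * y := Nat.mul_le_mul_left x hy

lemma pow_mul_le_add {q : ℝ} (h0 : 0 ≤ q) (h1 : q ≤ 1) (x y : ℕ) :
    q^(x * y) ≤ q^x + q^y := by
  rcases le_total x y with h | h
  · have hm : min x y = x := min_eq_left h
    calc q^(x*y) ≤ q^(min x y) := pow_le_pow_of_le_one h0 h1 (min_le_mul x y)
      _ = q^x := by rw [hm]
      _ ≤ q^x + q^y := le_add_of_nonneg_right (pow_nonneg h0 y)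
  · have hm : min x y = y := min_eq_right h
    calc q^(x*y) ≤ q^(min x y) := pow_le_pow_of_le_one h0 h1 (min_le_mul x y)
      _ = q^y := by rw [hm]
      _ ≤ q^x + q^y := le_add_of_nonneg_left (pow_nonneg h0 x)

noncomputable def tt (K n : ℕ) (s : ℝ) (v w : ℕ) : ℝ :=
  (1-s)^((Sv K n v ∪ Sv K n w).card) - (1-s)^((Sv K n v).card + (Sv K n w).card)

lemma tt_comm {K n : ℕ} {s : ℝ} (v w : ℕ) : tt K n s v w = tt K n s w v := by
  rw [tt, tt, Finset.union_comm, Nat.add_comm ((Sv K n v).card)]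

lemma tt_nonneg {K n : ℕ} {s : ℝ} (h0 : 0 ≤ 1-s) (h1 : 1-s ≤ 1) (v w : ℕ) :
    0 ≤ tt K n s v w :=
  sub_nonneg.mpr (pow_le_pow_of_le_one h0 h1 (Finset.card_union_le _ _))

lemma var_eq {K n : ℕ} {s : ℝ} (hs0 : 0 ≤ s) (hs1 : s ≤ 1) :
    (∫ ω, (((Zset K n ω).card : ℝ)) ^ 2 ∂(prunMeasure K n s))
      - (∫ ω, ((Zset K n ω).card : ℝ) ∂(prunMeasure K n s)) ^ 2
    = ∑ v ∈ Finset.Icc (K+1) n, ∑ w ∈ Finset.Icc (K+1) n, tt K n s v w := by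
  rw [integral_card_sq hs0 hs1, integral_card hs0 hs1, sq, Finset.sum_mul_sum]
  rw [← Finset.sum_sub_distrib]
  refine Finset.sum_congr rfl fun v _ => ?_
  rw [← Finset.sum_sub_distrib]
  refine Finset.sum_congr rfl fun w _ => ?_
  rw [tt, pow_add]

lemma tt_left_base {K n : ℕ} {s : ℝ} (w : ℕ) : tt K n s (K+1) w = 0 := by
  simp [tt, Sv_base_empty]

lemma sum_reduce {K n : ℕ} {s : ℝ} (hn : K + 2 ≤ n) :
    ∑ v ∈ Finset.Icc (K+1) n, ∑ w ∈ Finset.Icc (K+1) n, tt K n s v w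
    = ∑ v ∈ Finset.Icc (K+2) n, ∑ w ∈ Finset.Icc (K+2) n, tt K n s v w := by
  have hsub : Finset.Icc (K+2) n ⊆ Finset.Icc (K+1) n :=
    Finset.Icc_subset_Icc_left (by omega)
  have hinner : ∀ v, ∑ w ∈ Finset.Icc (K+1) n, tt K n s v w
      = ∑ w ∈ Finset.Icc (K+2) n, tt K n s v w := by
    intro v
    refine (Finset.sum_subset hsub fun x hx hnx => ?_).symm
    have hx1 : x = K+1 := by
      simp only [Finset.mem_Icc] at hx hnx; omega
    rw [hx1, tt_comm, tt_left_base]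
  calc ∑ v ∈ Finset.Icc (K+1) n, ∑ w ∈ Finset.Icc (K+1) n, tt K n s v w
      = ∑ v ∈ Finset.Icc (K+1) n, ∑ w ∈ Finset.Icc (K+2) n, tt K n s v w :=
        Finset.sum_congr rfl fun v _ => hinner v
    _ = ∑ v ∈ Finset.Icc (K+2) n, ∑ w ∈ Finset.Icc (K+2) n, tt K n s v w := by
        refine (Finset.sum_subset hsub fun x hx hnx => ?_).symm
        have hx1 : x = K+1 := by
          simp only [Finset.mem_Icc] at hx hnx; omega
        rw [hx1]
        exact Finset.sum_eq_zero fun w _ => tt_left_base w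

lemma tt_le {K n : ℕ} {s : ℝ} (hs0 : 0 < s) (hs1 : s < 1) {v w : ℕ}
    (hv : K+2 ≤ v) (hvw : v ≤ w) (hw : w ≤ n) :
    tt K n s v w ≤ (1-s)^(n-K-1) * ((1-s)^((w-(K+2))*(n-w)) * (1-s)^(w-v)) := by
  have h0 : (0:ℝ) ≤ 1 - s := by linarith
  have h1 : (1:ℝ) - s ≤ 1 := by linarith
  have hexp : (n-K-1) + ((w-(K+2))*(n-w) + (w-v)) ≤ (Sv K n v ∪ Sv K n w).card := by
    have hU := U_ge (K := K) (n := n) v w hv hvw hw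
    have haw : (Sv K n w).card = (n-K-1) + (w-(K+2))*(n-w) := by
      rw [card_Sv]; exact a_eq w (le_trans hv hvw) hw
    omega
  calc tt K n s v w ≤ (1-s)^((Sv K n v ∪ Sv K n w).card) :=
        sub_le_self _ (pow_nonneg h0 _)
    _ ≤ (1-s)^((n-K-1) + ((w-(K+2))*(n-w) + (w-v))) := pow_le_pow_of_le_one h0 h1 hexp
    _ = _ := by rw [pow_add, pow_add]

noncomputable def Bf (K n : ℕ) (s : ℝ) (v w : ℕ) : ℝ :=
  (1-s)^(n-K-1) * ((1-s)^((w-(K+2))*(n-w)) * (if v ≤ w then (1-s)^(w-v) else 0))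

lemma Bf_nonneg {K n : ℕ} {s : ℝ} (h0 : 0 ≤ 1-s) (v w : ℕ) : 0 ≤ Bf K n s v w := by
  refine mul_nonneg (pow_nonneg h0 _) (mul_nonneg (pow_nonneg h0 _) ?_)
  by_cases h : v ≤ w <;> simp [h, pow_nonneg h0]

lemma tt_le_Bf {K n : ℕ} {s : ℝ} (hs0 : 0 < s) (hs1 : s < 1) {v w : ℕ}
    (hv : v ∈ Finset.Icc (K+2) n) (hw : w ∈ Finset.Icc (K+2) n) :
    tt K n s v w ≤ Bf K n s v w + Bf K n s w v := by
  have h0 : (0:ℝ) ≤ 1 - s := by linarith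
  simp only [Finset.mem_Icc] at hv hw
  rcases le_total v w with h | h
  · have := tt_le hs0 hs1 hv.1 h hw.2
    have hB : Bf K n s v w = (1-s)^(n-K-1) * ((1-s)^((w-(K+2))*(n-w)) * (1-s)^(w-v)) := by
      rw [Bf, if_pos h]
    linarith [Bf_nonneg (K := K) (n := n) h0 w v]
  · have := tt_le hs0 hs1 hw.1 h hv.2
    have hB : Bf K n s w v = (1-s)^(n-K-1) * ((1-s)^((v-(K+2))*(n-v)) * (1-s)^(v-w)) := by
      rw [Bf, if_pos h]
    rw [tt_comm]
    linarith [Bf_nonneg (K := K) (n := n) h0 v w]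

lemma sum_Bf_le {K n : ℕ} {s : ℝ} (hs0 : 0 < s) (hs1 : s < 1) :
    ∑ w ∈ Finset.Icc (K+2) n, ∑ v ∈ Finset.Icc (K+2) n, Bf K n s v w
      ≤ (1-s)^(n-K-1) * ((1/s) * (1/s + 1/s)) := by
  have h0 : (0:ℝ) ≤ 1 - s := by linarith
  have h1 : (1:ℝ) - s ≤ 1 := by linarith
  have h1' : (1:ℝ) - s < 1 := by linarith
  have hion : 1 - (1 - s) = s := by ring
  have hite : ∀ w : ℕ, ∑ v ∈ Finset.Icc (K+2) n,
      (if v ≤ w then (1-s)^(w-v) else 0) ≤ 1/s := by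
    intro w
    have hfeq : (Finset.Icc (K+2) n).filter (fun v => v ≤ w)
        = Finset.Icc (K+2) (min w n) := by
      ext x
      simp only [Finset.mem_filter, Finset.mem_Icc, le_min_iff]
      omega
    rw [← Finset.sum_filter, hfeq]
    have h := sum_pow_sub_le h0 h1' (K+2) (min w n) w (min_le_left _ _)
    rwa [hion] at h
  have he2 : ∑ w ∈ Finset.Icc (K+2) n, (1-s)^((w-(K+2))*(n-w)) ≤ 1/s + 1/s := by
    calc ∑ w ∈ Finset.Icc (K+2) n, (1-s)^((w-(K+2))*(n-w))
        ≤ ∑ w ∈ Finset.Icc (K+2) n, ((1-s)^(w-(K+2)) + (1-s)^(n-w)) :=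
          Finset.sum_le_sum fun w _ => pow_mul_le_add h0 h1 _ _
      _ = (∑ w ∈ Finset.Icc (K+2) n, (1-s)^(w-(K+2)))
          + ∑ w ∈ Finset.Icc (K+2) n, (1-s)^(n-w) := Finset.sum_add_distrib
      _ ≤ 1/s + 1/s := by
          refine add_le_add ?_ ?_
          · have h := sum_pow_sub_le' h0 h1' (K+2) n
            rwa [hion] at h
          · have h := sum_pow_sub_le h0 h1' (K+2) n n le_rfl
            rwa [hion] at h
  calc ∑ w ∈ Finset.Icc (K+2) n, ∑ v ∈ Finset.Icc (K+2) n, Bf K n s v w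
      = ∑ w ∈ Finset.Icc (K+2) n, (1-s)^(n-K-1) * ((1-s)^((w-(K+2))*(n-w))
          * ∑ v ∈ Finset.Icc (K+2) n, (if v ≤ w then (1-s)^(w-v) else 0)) := by
        refine Finset.sum_congr rfl fun w _ => ?_
        simp only [Bf, ← Finset.mul_sum]
    _ ≤ ∑ w ∈ Finset.Icc (K+2) n, (1-s)^(n-K-1) * ((1-s)^((w-(K+2))*(n-w)) * (1/s)) := by
        refine Finset.sum_le_sum fun w _ => ?_
        exact mul_le_mul_of_nonneg_left
          (mul_le_mul_of_nonneg_left (hite w) (pow_nonneg h0 _)) (pow_nonneg h0 _)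
    _ = ((1-s)^(n-K-1) * (1/s)) * ∑ w ∈ Finset.Icc (K+2) n, (1-s)^((w-(K+2))*(n-w)) := by
        rw [Finset.mul_sum]
        exact Finset.sum_congr rfl fun w _ => by ring
    _ ≤ ((1-s)^(n-K-1) * (1/s)) * (1/s + 1/s) := by
        refine mul_le_mul_of_nonneg_left he2 (mul_nonneg (pow_nonneg h0 _) ?_)
        positivity
    _ = (1-s)^(n-K-1) * ((1/s) * (1/s + 1/s)) := by ring


set_option maxHeartbeats 1000000 in
/-- For `n ≥ K+2` and `s ∈ (0,1)`, the variance of `|Z|` satisfies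
`0 < Var(|Z|) < (8/s² − 2/s)(1-s)^(n-K-1)`. -/
theorem stmt10 (K n : ℕ) (hK : 1 ≤ K) (hn : K + 2 ≤ n)
    (s : ℝ) (hs0 : 0 < s) (hs1 : s < 1) :
    0 < (∫ ω, (((Zset K n ω).card : ℝ)) ^ 2 ∂(prunMeasure K n s))
          - (∫ ω, ((Zset K n ω).card : ℝ) ∂(prunMeasure K n s)) ^ 2 ∧
    (∫ ω, (((Zset K n ω).card : ℝ)) ^ 2 ∂(prunMeasure K n s))
          - (∫ ω, ((Zset K n ω).card : ℝ) ∂(prunMeasure K n s)) ^ 2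
      < (8 / s ^ 2 - 2 / s) * (1 - s) ^ (n - K - 1) := by
  have h0 : (0:ℝ) ≤ 1 - s := by linarith
  have h0' : (0:ℝ) < 1 - s := by linarith
  have h1 : (1:ℝ) - s ≤ 1 := by linarith
  have h1' : (1:ℝ) - s < 1 := by linarith
  rw [var_eq hs0.le hs1.le, sum_reduce hn]
  constructor
  · -- positivity
    have hmem : K+2 ∈ Finset.Icc (K+2) n := by
      simp only [Finset.mem_Icc]; omega
    have hpos : 0 < tt K n s (K+2) (K+2) := by
      rw [tt, Finset.union_self]
      have hc1 : 1 ≤ (Sv K n (K+2)).card := by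
        rw [card_Sv]
        have h : K+2-(K+1) = 1 := by omega
        rw [h, one_mul]
        omega
      have hlt : (Sv K n (K+2)).card < (Sv K n (K+2)).card + (Sv K n (K+2)).card := by
        omega
      have := pow_lt_pow_right_of_lt_one₀ h0' h1' hlt
      linarith
    calc (0:ℝ) < tt K n s (K+2) (K+2) := hpos
      _ ≤ ∑ w ∈ Finset.Icc (K+2) n, tt K n s (K+2) w :=
          Finset.single_le_sum (f := fun w => tt K n s (K+2) w)
            (fun w _ => tt_nonneg h0 h1 _ _) hmem
      _ ≤ ∑ v ∈ Finset.Icc (K+2) n, ∑ w ∈ Finset.Icc (K+2) n, tt K n s v w :=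
          Finset.single_le_sum (f := fun v => ∑ w ∈ Finset.Icc (K+2) n, tt K n s v w)
            (fun v _ => Finset.sum_nonneg fun w _ => tt_nonneg h0 h1 _ _) hmem
  · -- upper bound
    have hX : Finset.Icc (K+2) n = Finset.Icc (K+2) n := rfl
    have hswap : (∑ v ∈ Finset.Icc (K+2) n, ∑ w ∈ Finset.Icc (K+2) n, Bf K n s w v)
        = ∑ v ∈ Finset.Icc (K+2) n, ∑ w ∈ Finset.Icc (K+2) n, Bf K n s v w :=
      Finset.sum_comm
    have hswap2 : (∑ v ∈ Finset.Icc (K+2) n, ∑ w ∈ Finset.Icc (K+2) n, Bf K n s v w)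
        = ∑ w ∈ Finset.Icc (K+2) n, ∑ v ∈ Finset.Icc (K+2) n, Bf K n s v w :=
      Finset.sum_comm
    have key : 2 * ((1/s) * (1/s + 1/s)) < 8/s^2 - 2/s := by
      have hs2 : (0:ℝ) < s^2 := by positivity
      have hdiff : 8/s^2 - 2/s - 2*((1/s)*(1/s+1/s)) = (4-2*s)/s^2 := by
        field_simp
        ring
      have hpos2 : (0:ℝ) < (4-2*s)/s^2 := div_pos (by linarith) hs2
      linarith
    calc ∑ v ∈ Finset.Icc (K+2) n, ∑ w ∈ Finset.Icc (K+2) n, tt K n s v w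
        ≤ ∑ v ∈ Finset.Icc (K+2) n, ∑ w ∈ Finset.Icc (K+2) n,
            (Bf K n s v w + Bf K n s w v) :=
          Finset.sum_le_sum fun v hv => Finset.sum_le_sum fun w hw =>
            tt_le_Bf hs0 hs1 hv hw
      _ = (∑ v ∈ Finset.Icc (K+2) n, ∑ w ∈ Finset.Icc (K+2) n, Bf K n s v w)
          + ∑ v ∈ Finset.Icc (K+2) n, ∑ w ∈ Finset.Icc (K+2) n, Bf K n s w v := by
          simp [Finset.sum_add_distrib]
      _ = 2 * ∑ w ∈ Finset.Icc (K+2) n, ∑ v ∈ Finset.Icc (K+2) n, Bf K n s v w := by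
          rw [hswap, hswap2]; ring
      _ ≤ 2 * ((1-s)^(n-K-1) * ((1/s) * (1/s + 1/s))) := by
          have := sum_Bf_le (K := K) (n := n) hs0 hs1
          linarith
      _ = (2 * ((1/s) * (1/s + 1/s))) * (1-s)^(n-K-1) := by ring
      _ < (8/s^2 - 2/s) * (1-s)^(n-K-1) :=
          mul_lt_mul_of_pos_right key (pow_pos h0' _)
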